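/- Fix r > 1/2 and define y(s,r) = 4r·(Γ((s+2r+1)/(4r))·Γ((s+4r−1)/(4r)))/(Γ((s+1)/(4r))·Γ((s+2r−1)/(4r))) for s > 0. Then the function f(s) = ∂/∂s (ln y)(s,r) is the unique function on (0, ∞) tending to 0 at +∞ that satisfies the functional equation f(s) + f(s+2r) = 1/(s+1) + 1/(s+2r−1) = 2(s+r)/((s+1)(s+2r−1)) for all s > 0. -/

import Mathlib

open Filter Real

/-- Numerators of the convergents of a generalized continued fraction with
integer part `b₀`, partial numerators `a n` and partial denominators `b n` (for `n ≥ 1`). -/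
noncomputable def cfNum (b₀ : ℝ) (a b : ℕ → ℝ) : ℕ → ℝ
  | 0 => b₀
  | 1 => b 1 * b₀ + a 1
  | n + 2 => b (n + 2) * cfNum b₀ a b (n + 1) + a (n + 2) * cfNum b₀ a b n

/-- Denominators of the convergents of a generalized continued fraction. -/
noncomputable def cfDen (a b : ℕ → ℝ) : ℕ → ℝ
  | 0 => 1
  | 1 => b 1
  | n + 2 => b (n + 2) * cfDen a b (n + 1) + a (n + 2) * cfDen a b n

/-- `IsCFLimit b₀ a b L` means: the convergents of the generalized continued fraction
`b₀ + a 1 / (b 1 + a 2 / (b 2 + ⋯))` tend to `L`. -/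
def IsCFLimit (b₀ : ℝ) (a b : ℕ → ℝ) (L : ℝ) : Prop :=
  Filter.Tendsto (fun n => cfNum b₀ a b n / cfDen a b n) Filter.atTop (nhds L)

/-- The generalized Brouncker function `y(s, r)` expressed through the Gamma function. -/
noncomputable def yGen (r s : ℝ) : ℝ :=
  4 * r * (Real.Gamma ((s + 2*r + 1) / (4*r)) * Real.Gamma ((s + 4*r - 1) / (4*r))) /
    (Real.Gamma ((s + 1) / (4*r)) * Real.Gamma ((s + 2*r - 1) / (4*r)))


open Set

noncomputable def psi : ℝ → ℝ := deriv (fun t : ℝ => Real.log (Real.Gamma t))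

lemma diff_logGamma {x : ℝ} (hx : 0 < x) :
    DifferentiableAt ℝ (fun t : ℝ => Real.log (Real.Gamma t)) x :=
  (Real.differentiableAt_Gamma fun m =>
    (((neg_nonpos).mpr (Nat.cast_nonneg m)).trans_lt hx).ne').log
    (Real.Gamma_pos_of_pos hx).ne'

lemma psi_mono : MonotoneOn psi (Ioi 0) := by
  have := Real.convexOn_log_Gamma.monotoneOn_deriv (fun x hx => diff_logGamma hx)
  simpa [psi, Function.comp_def] using this

lemma psi_add_one {x : ℝ} (hx : 0 < x) : psi (x + 1) = psi x + 1 / x := by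
  have hev : (fun t : ℝ => Real.log (Real.Gamma (t + 1)))
      =ᶠ[nhds x] fun t : ℝ => Real.log (Real.Gamma t) + Real.log t := by
    filter_upwards [eventually_gt_nhds hx] with t ht
    rw [Real.Gamma_add_one ht.ne', Real.log_mul ht.ne' (Real.Gamma_pos_of_pos ht).ne',
      add_comm]
  have h1 : deriv (fun t : ℝ => Real.log (Real.Gamma (t + 1))) x = psi (x + 1) := by
    rw [psi]
    exact deriv_comp_add_const (fun t : ℝ => Real.log (Real.Gamma t)) 1 x
  have h2 : deriv (fun t : ℝ => Real.log (Real.Gamma t) + Real.log t) x = psi x + 1 / x := by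
    rw [deriv_fun_add (diff_logGamma hx) (Real.differentiableAt_log hx.ne'),
      Real.deriv_log, one_div]
    rfl
  rw [← h1, hev.deriv_eq, h2]

noncomputable def Dlog (r : ℝ) : ℝ → ℝ := fun s =>
  (psi ((s + 2*r + 1) / (4*r)) * (1/(4*r)) + psi ((s + 4*r - 1) / (4*r)) * (1/(4*r)))
    - psi ((s + 1) / (4*r)) * (1/(4*r)) - psi ((s + 2*r - 1) / (4*r)) * (1/(4*r))

lemma hasDerivAt_aux {r : ℝ} (c : ℝ) {s : ℝ} (h : 0 < (s + c) / (4*r)) :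
    HasDerivAt (fun t : ℝ => Real.log (Real.Gamma ((t + c) / (4*r))))
      (psi ((s + c) / (4*r)) * (1/(4*r))) s := by
  have inner : HasDerivAt (fun t : ℝ => (t + c) / (4*r)) (1/(4*r)) s := by
    simpa using ((hasDerivAt_id s).add_const c).div_const (4*r)
  exact (diff_logGamma h).hasDerivAt.comp s inner

lemma hasDerivAt_logy {r s : ℝ} (hr : 1/2 < r) (hs : 0 < s) :
    HasDerivAt (fun t : ℝ => Real.log (yGen r t)) (Dlog r s) s := by
  have h4r : (0:ℝ) < 4*r := by linarith
  have h1 : 0 < (s + (2*r+1)) / (4*r) := by positivity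
  have h2 : 0 < (s + (4*r-1)) / (4*r) := div_pos (by linarith) h4r
  have h3 : 0 < (s + 1) / (4*r) := by positivity
  have h4 : 0 < (s + (2*r-1)) / (4*r) := div_pos (by linarith) h4r
  have hG : HasDerivAt (fun t : ℝ =>
      Real.log (4*r) + (Real.log (Real.Gamma ((t + (2*r+1)) / (4*r)))
        + Real.log (Real.Gamma ((t + (4*r-1)) / (4*r)))
        - Real.log (Real.Gamma ((t + 1) / (4*r)))
        - Real.log (Real.Gamma ((t + (2*r-1)) / (4*r))))) (Dlog r s) s := by
    have h := ((((hasDerivAt_aux (2*r+1) h1).add (hasDerivAt_aux (4*r-1) h2)).sub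
      (hasDerivAt_aux 1 h3)).sub (hasDerivAt_aux (2*r-1) h4)).const_add (Real.log (4*r))
    simp only [show s + (2*r+1) = s + 2*r + 1 from by ring,
      show s + (4*r-1) = s + 4*r - 1 from by ring,
      show s + (2*r-1) = s + 2*r - 1 from by ring] at h
    exact h
  refine hG.congr_of_eventuallyEq ?_
  filter_upwards [eventually_gt_nhds hs] with t ht
  have p1 : 0 < Real.Gamma ((t + 2*r + 1) / (4*r)) :=
    Real.Gamma_pos_of_pos (div_pos (by linarith) h4r)
  have p2 : 0 < Real.Gamma ((t + 4*r - 1) / (4*r)) :=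
    Real.Gamma_pos_of_pos (div_pos (by linarith) h4r)
  have p3 : 0 < Real.Gamma ((t + 1) / (4*r)) :=
    Real.Gamma_pos_of_pos (div_pos (by linarith) h4r)
  have p4 : 0 < Real.Gamma ((t + 2*r - 1) / (4*r)) :=
    Real.Gamma_pos_of_pos (div_pos (by linarith) h4r)
  rw [yGen, Real.log_div (by positivity) (by positivity),
    Real.log_mul (by positivity) (by positivity), Real.log_mul p1.ne' p2.ne',
    Real.log_mul p3.ne' p4.ne']
  have e1 : t + (2*r+1) = t + 2*r + 1 := by ring
  have e2 : t + (4*r-1) = t + 4*r - 1 := by ring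
  have e4 : t + (2*r-1) = t + 2*r - 1 := by ring
  rw [e1, e2, e4]
  ring

lemma yGen_pos {r s : ℝ} (hr : 1/2 < r) (hs : 0 < s) : 0 < yGen r s := by
  have h4r : (0:ℝ) < 4*r := by linarith
  have p1 := Real.Gamma_pos_of_pos (div_pos (by linarith : (0:ℝ) < s + 2*r + 1) h4r)
  have p2 := Real.Gamma_pos_of_pos (div_pos (by linarith : (0:ℝ) < s + 4*r - 1) h4r)
  have p3 := Real.Gamma_pos_of_pos (div_pos (by linarith : (0:ℝ) < s + 1) h4r)
  have p4 := Real.Gamma_pos_of_pos (div_pos (by linarith : (0:ℝ) < s + 2*r - 1) h4r)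
  rw [yGen]; positivity

lemma yGen_prod {r : ℝ} (hr : 1/2 < r) {t : ℝ} (ht : 0 < t) :
    yGen r t * yGen r (t + 2*r) = (t+1) * (t + 2*r - 1) := by
  have h4r : (0:ℝ) < 4*r := by linarith
  have q1 : (0:ℝ) < (t+1)/(4*r) := div_pos (by linarith) h4r
  have q2 : (0:ℝ) < (t+2*r-1)/(4*r) := div_pos (by linarith) h4r
  have q3 : (0:ℝ) < (t+2*r+1)/(4*r) := div_pos (by linarith) h4r
  have q4 : (0:ℝ) < (t+4*r-1)/(4*r) := div_pos (by linarith) h4r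
  have e1 : (t + 2*r + 2*r + 1)/(4*r) = (t+1)/(4*r) + 1 := by field_simp; ring
  have e2 : (t + 2*r + 4*r - 1)/(4*r) = (t+2*r-1)/(4*r) + 1 := by field_simp; ring
  have e3 : (t + 2*r + 2*r - 1)/(4*r) = (t+4*r-1)/(4*r) := by ring_nf
  rw [yGen, yGen, e1, e2, e3, Real.Gamma_add_one q1.ne', Real.Gamma_add_one q2.ne']
  have g1 := (Real.Gamma_pos_of_pos q1).ne'
  have g2 := (Real.Gamma_pos_of_pos q2).ne'
  have g3 := (Real.Gamma_pos_of_pos q3).ne'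
  have g4 := (Real.Gamma_pos_of_pos q4).ne'
  have hr0 : r ≠ 0 := by linarith
  generalize Real.Gamma ((t+1)/(4*r)) = A at g1 ⊢
  generalize Real.Gamma ((t+2*r-1)/(4*r)) = B at g2 ⊢
  generalize Real.Gamma ((t+2*r+1)/(4*r)) = C at g3 ⊢
  generalize Real.Gamma ((t+4*r-1)/(4*r)) = D at g4 ⊢
  field_simp

lemma dlog_funct_eq {r s : ℝ} (hr : 1/2 < r) (hs : 0 < s) :
    Dlog r s + Dlog r (s + 2*r) = 1/(s+1) + 1/(s+2*r-1) := by
  have hs2 : 0 < s + 2*r := by linarith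
  have h1 := hasDerivAt_logy hr hs
  have h2 := (hasDerivAt_logy hr hs2).comp s ((hasDerivAt_id s).add_const (2*r))
  rw [mul_one] at h2
  have hL := h1.add h2
  have hR : HasDerivAt (fun t : ℝ => Real.log (t+1) + Real.log (t + 2*r - 1))
      (1/(s+1) + 1/(s+2*r-1)) s := by
    have r1 : HasDerivAt (fun t : ℝ => t + 1) 1 s := (hasDerivAt_id s).add_const 1
    have r2 : HasDerivAt (fun t : ℝ => t + 2*r - 1) 1 s :=
      ((hasDerivAt_id s).add_const (2*r)).sub_const 1
    have l1 := r1.log (by linarith : s + 1 ≠ 0)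
    have l2 := r2.log (by intro h; nlinarith : s + 2*r - 1 ≠ 0)
    exact l1.add l2
  have hev : (fun t : ℝ => Real.log (t+1) + Real.log (t + 2*r - 1))
      =ᶠ[nhds s] (fun t : ℝ => Real.log (yGen r t) + Real.log (yGen r (t + 2*r))) := by
    filter_upwards [eventually_gt_nhds hs] with t ht
    have hy1 := yGen_pos hr ht
    have hy2 := yGen_pos hr (show 0 < t + 2*r by linarith)
    have hp := yGen_prod hr ht
    have : Real.log (yGen r t) + Real.log (yGen r (t+2*r))
        = Real.log (t+1) + Real.log (t+2*r-1) := by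
      rw [← Real.log_mul hy1.ne' hy2.ne', hp,
        Real.log_mul (by linarith) (by intro h; nlinarith)]
    exact this.symm
  exact (hR.congr_of_eventuallyEq hev.symm).unique hL |>.symm

lemma dlog_bounds {r : ℝ} (hr : 1/2 < r) {s : ℝ} (hs : 0 < s) :
    0 ≤ Dlog r s ∧ Dlog r s ≤ 1/(s+1) + 1/(s+2*r-1) := by
  have h4r : (0:ℝ) < 4*r := by linarith
  have hx3p : 0 < (s+1)/(4*r) := div_pos (by linarith) h4r
  have hx4p : 0 < (s+2*r-1)/(4*r) := div_pos (by linarith) h4r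
  have hA1 : psi ((s+1)/(4*r)) ≤ psi ((s+2*r+1)/(4*r)) := by
    apply psi_mono (Set.mem_Ioi.mpr hx3p)
      (Set.mem_Ioi.mpr (div_pos (by linarith) h4r))
    gcongr <;> linarith
  have hA2 : psi ((s+2*r+1)/(4*r)) ≤ psi ((s+1)/(4*r)) + (4*r)/(s+1) := by
    have he : psi ((s+1)/(4*r) + 1) = psi ((s+1)/(4*r)) + (4*r)/(s+1) := by
      rw [psi_add_one hx3p, one_div_div]
    rw [← he]
    apply psi_mono (Set.mem_Ioi.mpr (div_pos (by linarith) h4r))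
      (Set.mem_Ioi.mpr (by linarith))
    rw [show (s+1)/(4*r) + 1 = (s+1+4*r)/(4*r) by field_simp]
    exact (div_le_div_iff_of_pos_right h4r).mpr (by linarith)
  have hB1 : psi ((s+2*r-1)/(4*r)) ≤ psi ((s+4*r-1)/(4*r)) := by
    apply psi_mono (Set.mem_Ioi.mpr hx4p)
      (Set.mem_Ioi.mpr (div_pos (by linarith) h4r))
    gcongr <;> linarith
  have hB2 : psi ((s+4*r-1)/(4*r)) ≤ psi ((s+2*r-1)/(4*r)) + (4*r)/(s+2*r-1) := by
    have he : psi ((s+2*r-1)/(4*r) + 1) = psi ((s+2*r-1)/(4*r)) + (4*r)/(s+2*r-1) := by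
      rw [psi_add_one hx4p, one_div_div]
    rw [← he]
    apply psi_mono (Set.mem_Ioi.mpr (div_pos (by linarith) h4r))
      (Set.mem_Ioi.mpr (by linarith))
    rw [show (s+2*r-1)/(4*r) + 1 = (s+2*r-1+4*r)/(4*r) by field_simp]
    exact (div_le_div_iff_of_pos_right h4r).mpr (by linarith)
  have hkey : Dlog r s = (psi ((s+2*r+1)/(4*r)) + psi ((s+4*r-1)/(4*r))
      - psi ((s+1)/(4*r)) - psi ((s+2*r-1)/(4*r))) * (1/(4*r)) := by
    rw [Dlog]; ring
  have hk : (0:ℝ) ≤ 1/(4*r) := by positivity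
  have heq : ((4*r)/(s+1) + (4*r)/(s+2*r-1)) * (1/(4*r)) = 1/(s+1) + 1/(s+2*r-1) := by
    have h1 : s + 1 ≠ 0 := by linarith
    have h2 : s + 2*r - 1 ≠ 0 := by intro h; nlinarith
    field_simp
  constructor
  · rw [hkey]
    exact mul_nonneg (by linarith) hk
  · rw [hkey, ← heq]
    exact mul_le_mul_of_nonneg_right (by linarith) hk

lemma tendsto_bound {r : ℝ} (hr : 1/2 < r) :
    Tendsto (fun s : ℝ => 1/(s+1) + 1/(s+2*r-1)) atTop (nhds 0) := by
  have t1 : Tendsto (fun s : ℝ => 1/(s+1)) atTop (nhds 0) := by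
    simpa [one_div, Function.comp_def] using
      tendsto_inv_atTop_zero.comp (tendsto_atTop_add_const_right (atTop : Filter ℝ) 1 tendsto_id)
  have t2 : Tendsto (fun s : ℝ => 1/(s+2*r-1)) atTop (nhds 0) := by
    simpa [one_div, Function.comp_def, sub_eq_add_neg, add_assoc] using
      tendsto_inv_atTop_zero.comp (tendsto_atTop_add_const_right (atTop : Filter ℝ) (2*r-1) tendsto_id)
  simpa using t1.add t2

lemma tendsto_dlog {r : ℝ} (hr : 1/2 < r) : Tendsto (Dlog r) atTop (nhds 0) := by
  apply squeeze_zero' ?_ ?_ (tendsto_bound hr)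
  · filter_upwards [eventually_gt_atTop 0] with s hs using (dlog_bounds hr hs).1
  · filter_upwards [eventually_gt_atTop 0] with s hs using (dlog_bounds hr hs).2

theorem first_log_deriv_functional_equation (r : ℝ) (hr : 1 / 2 < r) :
    (∀ s : ℝ, 0 < s →
        deriv (fun t : ℝ => Real.log (yGen r t)) s +
          deriv (fun t : ℝ => Real.log (yGen r t)) (s + 2 * r) =
        1 / (s + 1) + 1 / (s + 2 * r - 1)) ∧
    (∀ s : ℝ, 0 < s →
        1 / (s + 1) + 1 / (s + 2 * r - 1) = 2 * (s + r) / ((s + 1) * (s + 2 * r - 1))) ∧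
    Tendsto (fun s : ℝ => deriv (fun t : ℝ => Real.log (yGen r t)) s) atTop (nhds 0) ∧
    ∀ f : ℝ → ℝ,
      (∀ s : ℝ, 0 < s → f s + f (s + 2 * r) = 1 / (s + 1) + 1 / (s + 2 * r - 1)) →
      Tendsto f atTop (nhds 0) →
      ∀ s : ℝ, 0 < s → f s = deriv (fun t : ℝ => Real.log (yGen r t)) s := by
  have hderiv : ∀ s : ℝ, 0 < s → deriv (fun t : ℝ => Real.log (yGen r t)) s = Dlog r s :=
    fun s hs => (hasDerivAt_logy hr hs).deriv
  refine ⟨?_, ?_, ?_, ?_⟩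
  · intro s hs
    rw [hderiv s hs, hderiv _ (by linarith : (0:ℝ) < s + 2 * r)]
    exact dlog_funct_eq hr hs
  · intro s hs
    have h1 : s + 1 ≠ 0 := by linarith
    have h2 : s + 2 * r - 1 ≠ 0 := by intro h; nlinarith
    field_simp
    ring
  · apply (tendsto_dlog hr).congr'
    filter_upwards [eventually_gt_atTop 0] with s hs
    exact (hderiv s hs).symm
  · intro f hfe hft s hs
    have hr0 : (0:ℝ) < r := by linarith
    set g : ℝ → ℝ := deriv (fun u : ℝ => Real.log (yGen r u)) with hg
    have hge : ∀ t : ℝ, 0 < t → g t + g (t + 2 * r) = 1 / (t + 1) + 1 / (t + 2 * r - 1) := by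
      intro t ht
      rw [hderiv t ht, hderiv _ (by linarith : (0:ℝ) < t + 2 * r)]
      exact dlog_funct_eq hr ht
    have step : ∀ t : ℝ, 0 < t → f t - g t = f (t + 4 * r) - g (t + 4 * r) := by
      intro t ht
      have k1 := hfe t ht
      have k2 := hge t ht
      have k3 := hfe (t + 2 * r) (by linarith)
      have k4 := hge (t + 2 * r) (by linarith)
      rw [show t + 2 * r + 2 * r = t + 4 * r from by ring] at k3 k4
      linarith
    have iter : ∀ n : ℕ, f s - g s = f (s + 4 * r * n) - g (s + 4 * r * n) := by
      intro n
      induction n with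
      | zero => simp
      | succ n ih =>
        have hpos : (0:ℝ) < s + 4 * r * n := by
          have : (0:ℝ) ≤ 4 * r * n := by positivity
          linarith
        rw [ih, show s + 4 * r * ((n : ℕ) + 1 : ℕ) = (s + 4 * r * n) + 4 * r from by
          push_cast; ring]
        exact step _ hpos
    have hgt : Tendsto g atTop (nhds 0) := by
      apply (tendsto_dlog hr).congr'
      filter_upwards [eventually_gt_atTop 0] with t ht
      exact (hderiv t ht).symm
    have hcomp : Tendsto (fun n : ℕ => s + 4 * r * (n : ℝ)) atTop atTop := by
      apply tendsto_atTop_add_const_left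
      exact Tendsto.const_mul_atTop (by linarith : (0:ℝ) < 4 * r) tendsto_natCast_atTop_atTop
    have h0 : Tendsto (fun n : ℕ => f (s + 4 * r * n) - g (s + 4 * r * n)) atTop (nhds 0) := by
      have := (hft.sub hgt).comp hcomp
      simpa [Function.comp_def] using this
    have hconst : Tendsto (fun _ : ℕ => f s - g s) atTop (nhds 0) :=
      h0.congr fun n => (iter n).symm
    have hz : (0:ℝ) = f s - g s := tendsto_nhds_unique hconst tendsto_const_nhds
    have : f s = g s := by linarith
    simpa [hg] using this
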